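/- arXiv:1608.05994 — 2 statements merged into one kernel-verified Lean document; each statement's English description precedes it below -/
import Mathlib

section
/- Let H_n(t) = \int_0^π exp(t cos θ) sin^{n-2} θ dθ. If t_n is a sequence of nonnegative reals with t_n = o(n^{1/2}), then H_n(t_n)/H_n(0) → 1 as n → ∞. -/
open Filter Real intervalIntegral

private lemma xexp_le_one' {x : ℝ} (hx : 0 ≤ x) : x * Real.exp (-x) ≤ 1 := by
  have h1 : x ≤ Real.exp x := by linarith [Real.add_one_le_exp x]
  calc x * Real.exp (-x) ≤ Real.exp x * Real.exp (-x) :=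
        mul_le_mul_of_nonneg_right h1 (Real.exp_pos _).le
    _ = 1 := by rw [← Real.exp_add]; simp

private lemma exp_sub_one_le' {y : ℝ} (hy : 0 ≤ y) : Real.exp y - 1 ≤ y * Real.exp y := by
  have h1 : 1 - y ≤ Real.exp (-y) := by linarith [Real.add_one_le_exp (-y)]
  have h2 : Real.exp (-y) * Real.exp y = 1 := by rw [← Real.exp_add]; simp
  nlinarith [mul_le_mul_of_nonneg_right h1 (Real.exp_pos y).le]

private lemma pointwise_bound' (j k : ℕ) (hk : 1 ≤ k) (a c s : ℝ) (ha0 : 0 ≤ a)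
    (hak : 2 * a ≤ (k : ℝ)) (hs : 0 ≤ s) (hcs : s ^ 2 = 1 - c ^ 2) :
    Real.exp (a * c ^ 2) * s ^ (j + 2 * k) ≤ s ^ (j + 2 * k) + 2 * a / k * s ^ j := by
  have hc2 : (0:ℝ) ≤ c ^ 2 := sq_nonneg c
  have hkR : (0:ℝ) < k := by exact_mod_cast hk
  have hy0 : 0 ≤ a * c ^ 2 := mul_nonneg ha0 hc2
  have hsj : 0 ≤ s ^ j := pow_nonneg hs j
  have hsplit : s ^ (j + 2 * k) = (s ^ 2) ^ k * s ^ j := by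
    rw [pow_add, pow_mul]; ring
  set E := Real.exp (a * c ^ 2) with hE
  have f1 : E - 1 ≤ a * c ^ 2 * E := exp_sub_one_le' hy0
  have f2 : (s ^ 2) ^ k ≤ Real.exp (-((k : ℝ) * c ^ 2)) := by
    rw [hcs]
    have h1 : (1 : ℝ) - c ^ 2 ≤ Real.exp (-c ^ 2) := by
      linarith [Real.add_one_le_exp (-c ^ 2)]
    have h0 : (0:ℝ) ≤ 1 - c ^ 2 := by nlinarith [sq_nonneg s]
    calc (1 - c ^ 2) ^ k ≤ Real.exp (-c ^ 2) ^ k := pow_le_pow_left₀ h0 h1 k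
      _ = Real.exp (-((k : ℝ) * c ^ 2)) := by
          rw [← Real.exp_nat_mul]; ring_nf
  have f4 : c ^ 2 * Real.exp (-((k : ℝ) / 2 * c ^ 2)) ≤ 2 / (k:ℝ) := by
    have hx0 : (0:ℝ) ≤ (k : ℝ) / 2 * c ^ 2 := by positivity
    have hxe := xexp_le_one' hx0
    calc c ^ 2 * Real.exp (-((k : ℝ) / 2 * c ^ 2))
        = 2 / (k:ℝ) * (((k : ℝ) / 2 * c ^ 2) * Real.exp (-((k : ℝ) / 2 * c ^ 2))) := by
          field_simp
      _ ≤ 2 / (k:ℝ) * 1 := mul_le_mul_of_nonneg_left hxe (by positivity)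
      _ = 2 / (k:ℝ) := mul_one _
  have key : (E - 1) * ((s ^ 2) ^ k * s ^ j) ≤ 2 * a / k * s ^ j := by
    calc (E - 1) * ((s ^ 2) ^ k * s ^ j)
        ≤ (a * c ^ 2 * E) * ((s ^ 2) ^ k * s ^ j) := by
          apply mul_le_mul_of_nonneg_right f1
          exact mul_nonneg (pow_nonneg (sq_nonneg s) k) hsj
      _ ≤ (a * c ^ 2 * E) * (Real.exp (-((k : ℝ) * c ^ 2)) * s ^ j) := by
          apply mul_le_mul_of_nonneg_left
            (mul_le_mul_of_nonneg_right f2 hsj)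
          exact mul_nonneg hy0 (Real.exp_pos _).le
      _ = a * (c ^ 2 * (E * Real.exp (-((k : ℝ) * c ^ 2)))) * s ^ j := by ring
      _ ≤ a * (c ^ 2 * Real.exp (-((k : ℝ) / 2 * c ^ 2))) * s ^ j := by
          apply mul_le_mul_of_nonneg_right _ hsj
          apply mul_le_mul_of_nonneg_left _ ha0
          apply mul_le_mul_of_nonneg_left _ hc2
          rw [hE, ← Real.exp_add]
          apply Real.exp_le_exp.2
          nlinarith
      _ ≤ a * (2 / k) * s ^ j := by
          apply mul_le_mul_of_nonneg_right _ hsj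
          exact mul_le_mul_of_nonneg_left f4 ha0
      _ = 2 * a / k * s ^ j := by ring
  have hid : (E - 1) * ((s ^ 2) ^ k * s ^ j)
      = E * ((s ^ 2) ^ k * s ^ j) - (s ^ 2) ^ k * s ^ j := by ring
  rw [hsplit]
  linarith [key, hid.symm.le, hid.le]

private lemma sinh_cos_int' (m : ℕ) (t : ℝ) :
    ∫ θ in (0:ℝ)..π, Real.sinh (t * Real.cos θ) * Real.sin θ ^ m = 0 := by
  have h := intervalIntegral.integral_comp_sub_left
    (f := fun θ => Real.sinh (t * Real.cos θ) * Real.sin θ ^ m) (a := 0) (b := π) π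
  simp only [Real.cos_pi_sub, Real.sin_pi_sub, mul_neg, Real.sinh_neg, neg_mul,
    intervalIntegral.integral_neg, sub_zero, sub_self] at h
  linarith

private lemma wallis_prod' (j : ℕ) :
    (∫ x in (0:ℝ)..π, sin x ^ j) * (∫ x in (0:ℝ)..π, sin x ^ (j + 1)) = 2 * π / (j + 1) := by
  induction j with
  | zero => simp [integral_sin]; ring
  | succ i ih =>
    have hred : (∫ x in (0:ℝ)..π, sin x ^ (i + 2))
        = ((i:ℝ) + 1) / ((i:ℝ) + 2) * ∫ x in (0:ℝ)..π, sin x ^ i := by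
      rw [integral_sin_pow]; simp
    have h1 : ((i:ℝ) + 1) ≠ 0 := by positivity
    have h2 : ((i:ℝ) + 2) ≠ 0 := by positivity
    have hre : (∫ x in (0:ℝ)..π, sin x ^ (i + 1)) *
        (((i:ℝ) + 1) / ((i:ℝ) + 2) * ∫ x in (0:ℝ)..π, sin x ^ i)
        = ((i:ℝ) + 1) / ((i:ℝ) + 2) *
          ((∫ x in (0:ℝ)..π, sin x ^ i) * ∫ x in (0:ℝ)..π, sin x ^ (i + 1)) := by ring
    rw [show i + 1 + 1 = i + 2 from rfl, hred, hre, ih]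
    push_cast
    field_simp
    ring

private lemma sin_pow_ratio' (i m : ℕ) (him : i + 1 ≤ m) (h4 : m + 1 ≤ 4 * (i + 1)) :
    (∫ x in (0:ℝ)..π, sin x ^ (i + 1)) ≤ 2 * ∫ x in (0:ℝ)..π, sin x ^ m := by
  set A := ∫ x in (0:ℝ)..π, sin x ^ (i + 1) with hA
  set B := ∫ x in (0:ℝ)..π, sin x ^ m with hB
  have hApos : 0 < A := integral_sin_pow_pos _
  have hBpos : 0 < B := integral_sin_pow_pos _
  have hA2 : A ^ 2 ≤ 2 * π / ((i:ℝ) + 1) := by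
    have hmono : A ≤ ∫ x in (0:ℝ)..π, sin x ^ i := integral_sin_pow_succ_le _
    calc A ^ 2 = A * A := sq A
      _ ≤ (∫ x in (0:ℝ)..π, sin x ^ i) * A := by nlinarith
      _ = 2 * π / ((i:ℝ) + 1) := wallis_prod' i
  have hB2 : 2 * π / ((m:ℝ) + 1) ≤ B ^ 2 := by
    have hmono : (∫ x in (0:ℝ)..π, sin x ^ (m + 1)) ≤ B := integral_sin_pow_succ_le _
    have hpos2 : (0:ℝ) < ∫ x in (0:ℝ)..π, sin x ^ (m + 1) := integral_sin_pow_pos _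
    calc 2 * π / ((m:ℝ) + 1) = B * ∫ x in (0:ℝ)..π, sin x ^ (m + 1) := (wallis_prod' m).symm
      _ ≤ B * B := by nlinarith
      _ = B ^ 2 := (sq B).symm
  have h4' : (m:ℝ) + 1 ≤ 4 * ((i:ℝ) + 1) := by exact_mod_cast h4
  have hcmp : 2 * π / ((i:ℝ) + 1) ≤ 4 * (2 * π / ((m:ℝ) + 1)) := by
    rw [show (4:ℝ) * (2 * π / ((m:ℝ) + 1)) = 8 * π / ((m:ℝ) + 1) by ring]
    rw [div_le_div_iff₀ (by positivity) (by positivity)]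
    nlinarith [Real.pi_pos]
  have hsq : A ^ 2 ≤ (2 * B) ^ 2 := by nlinarith
  have := Real.sqrt_le_sqrt hsq
  rwa [Real.sqrt_sq hApos.le, Real.sqrt_sq (by positivity)] at this

/-- With `H_n(t) = ∫_0^π e^{t cos θ} sin^{n-2} θ dθ`, if `t_n ≥ 0` and
`t_n = o(√n)`, then `H_n(t_n)/H_n(0) → 1`. -/
theorem bessel_ratio_tendsto_one
    (H : ℕ → ℝ → ℝ)
    (hH : ∀ n t, H n t = ∫ θ in (0:ℝ)..Real.pi, Real.exp (t * Real.cos θ) * Real.sin θ ^ (n - 2))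
    (t : ℕ → ℝ) (ht : ∀ n, 0 ≤ t n)
    (hto : t =o[atTop] (fun n : ℕ => Real.sqrt n)) :
    Tendsto (fun n => H n (t n) / H n 0) atTop (nhds 1) := by
  have hsq : Tendsto (fun n : ℕ => t n ^ 2 / (n : ℝ)) atTop (nhds 0) := by
    have h1 : (fun n : ℕ => t n ^ 2) =o[atTop] (fun n : ℕ => (n : ℝ)) := by
      have h2 := hto.mul hto
      have h3 : (fun n : ℕ => Real.sqrt n * Real.sqrt n) =ᶠ[atTop] (fun n : ℕ => (n:ℝ)) :=
        Eventually.of_forall fun n => Real.mul_self_sqrt (Nat.cast_nonneg n)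
      have h4 : (fun n : ℕ => t n * t n) = (fun n : ℕ => t n ^ 2) := by
        funext n; ring
      rw [← h4]
      exact h2.trans_eventuallyEq h3
    exact h1.tendsto_div_nhds_zero
  have hup : Tendsto (fun n : ℕ => 1 + 16 * (t n ^ 2 / n)) atTop (nhds 1) := by
    have := (hsq.const_mul (16:ℝ)).const_add (1:ℝ)
    simpa using this
  have hkey : ∀ᶠ n in atTop,
      1 ≤ H n (t n) / H n 0 ∧ H n (t n) / H n 0 ≤ 1 + 16 * (t n ^ 2 / n) := by
    have hev : ∀ᶠ n in atTop, t n ^ 2 / (n:ℝ) ≤ 1 / 16 :=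
      hsq.eventually (eventually_le_nhds (by norm_num))
    filter_upwards [eventually_ge_atTop 100, hev] with n hn ht2
    set k := (n - 2) / 4 with hk
    set j := (n - 2) - 2 * k with hj
    have hjk : n - 2 = j + 2 * k := by omega
    have hk1 : 1 ≤ k := by omega
    have hj1 : 1 ≤ j := by omega
    have h4j : (n - 2) + 1 ≤ 4 * j := by omega
    have h8k : n ≤ 8 * k := by omega
    have hnR : (0:ℝ) < n := by
      have : 0 < n := by omega
      exact_mod_cast this
    have hkR : (0:ℝ) < k := by exact_mod_cast hk1
    set a := t n ^ 2 / 2 with ha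
    have ha0 : 0 ≤ a := by positivity
    have h8k' : (n:ℝ) ≤ 8 * k := by exact_mod_cast h8k
    have ht2' : t n ^ 2 ≤ 1 / 16 * (n:ℝ) := (div_le_iff₀ hnR).mp ht2
    have h2ak : 2 * a ≤ (k:ℝ) := by rw [ha]; nlinarith
    set M := j + 2 * k with hM
    set IM := ∫ x in (0:ℝ)..π, sin x ^ M with hIM
    set IJ := ∫ x in (0:ℝ)..π, sin x ^ j with hIJ
    have hIMpos : 0 < IM := integral_sin_pow_pos _
    have hIJpos : 0 < IJ := integral_sin_pow_pos _
    -- integrability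
    have int_sinM : IntervalIntegrable (fun x => Real.sin x ^ M) MeasureTheory.volume 0 π :=
      (by fun_prop : Continuous fun x => Real.sin x ^ M).intervalIntegrable 0 π
    have int_cosh : IntervalIntegrable (fun x => Real.cosh (t n * Real.cos x) * Real.sin x ^ M)
        MeasureTheory.volume 0 π :=
      (by fun_prop : Continuous fun x => Real.cosh (t n * Real.cos x) * Real.sin x ^ M).intervalIntegrable 0 π
    have int_sinh : IntervalIntegrable (fun x => Real.sinh (t n * Real.cos x) * Real.sin x ^ M)
        MeasureTheory.volume 0 π :=
      (by fun_prop : Continuous fun x => Real.sinh (t n * Real.cos x) * Real.sin x ^ M).intervalIntegrable 0 π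
    have int_rhs : IntervalIntegrable (fun x => Real.sin x ^ M + 2 * a / k * Real.sin x ^ j)
        MeasureTheory.volume 0 π :=
      (by fun_prop : Continuous fun x => Real.sin x ^ M + 2 * a / k * Real.sin x ^ j).intervalIntegrable 0 π
    -- H n 0 = IM
    have hH0 : H n 0 = IM := by
      rw [hH, hjk]
      simp [hIM]
    -- split H n (t n)
    have hsplit : H n (t n) = ∫ x in (0:ℝ)..π, Real.cosh (t n * Real.cos x) * Real.sin x ^ M := by
      rw [hH, hjk]
      have hfun : (fun θ : ℝ => Real.exp (t n * Real.cos θ) * Real.sin θ ^ M)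
          = fun θ : ℝ => Real.cosh (t n * Real.cos θ) * Real.sin θ ^ M
            + Real.sinh (t n * Real.cos θ) * Real.sin θ ^ M := by
        funext θ; rw [← add_mul, Real.cosh_add_sinh]
      rw [show (∫ θ in (0:ℝ)..π, Real.exp (t n * Real.cos θ) * Real.sin θ ^ M)
          = ∫ θ in (0:ℝ)..π, (Real.cosh (t n * Real.cos θ) * Real.sin θ ^ M
            + Real.sinh (t n * Real.cos θ) * Real.sin θ ^ M) from by rw [← hfun],
        intervalIntegral.integral_add int_cosh int_sinh, sinh_cos_int' M (t n), add_zero]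
    -- lower bound
    have hlow : IM ≤ H n (t n) := by
      rw [hsplit, hIM]
      apply intervalIntegral.integral_mono_on Real.pi_pos.le int_sinM int_cosh
      intro x hx
      have hs0 : 0 ≤ Real.sin x := Real.sin_nonneg_of_mem_Icc hx
      calc Real.sin x ^ M = 1 * Real.sin x ^ M := (one_mul _).symm
        _ ≤ Real.cosh (t n * Real.cos x) * Real.sin x ^ M :=
            mul_le_mul_of_nonneg_right (Real.one_le_cosh _) (pow_nonneg hs0 M)
    -- upper bound
    have hupint : H n (t n) ≤ IM + 2 * a / k * IJ := by
      rw [hsplit]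
      have hmono : (∫ x in (0:ℝ)..π, Real.cosh (t n * Real.cos x) * Real.sin x ^ M)
          ≤ ∫ x in (0:ℝ)..π, (Real.sin x ^ M + 2 * a / k * Real.sin x ^ j) := by
        apply intervalIntegral.integral_mono_on Real.pi_pos.le int_cosh int_rhs
        intro x hx
        have hs0 : 0 ≤ Real.sin x := Real.sin_nonneg_of_mem_Icc hx
        have hc1 : Real.cosh (t n * Real.cos x) ≤ Real.exp (a * Real.cos x ^ 2) := by
          have := Real.cosh_le_exp_half_sq (t n * Real.cos x)
          rwa [show (t n * Real.cos x) ^ 2 / 2 = a * Real.cos x ^ 2 by rw [ha]; ring] at this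
        calc Real.cosh (t n * Real.cos x) * Real.sin x ^ M
            ≤ Real.exp (a * Real.cos x ^ 2) * Real.sin x ^ M :=
              mul_le_mul_of_nonneg_right hc1 (pow_nonneg hs0 M)
          _ ≤ Real.sin x ^ M + 2 * a / k * Real.sin x ^ j :=
              pointwise_bound' j k hk1 a (Real.cos x) (Real.sin x) ha0 h2ak hs0 (Real.sin_sq x)
      have hadd : (∫ x in (0:ℝ)..π, (Real.sin x ^ M + 2 * a / k * Real.sin x ^ j))
          = IM + 2 * a / k * IJ := by
        rw [intervalIntegral.integral_add int_sinM
          ((by fun_prop : Continuous fun x => 2 * a / k * Real.sin x ^ j).intervalIntegrable 0 π),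
          intervalIntegral.integral_const_mul]
      linarith [hmono, hadd.le, hadd.symm.le]
    -- ratio of integrals
    have hratio : IJ ≤ 2 * IM := by
      obtain ⟨i, hi⟩ : ∃ i, j = i + 1 := ⟨j - 1, by omega⟩
      rw [hIJ, hIM, hi]
      apply sin_pow_ratio'
      · omega
      · omega
    -- coefficient bound
    have hcoef : 2 * a / k * 2 ≤ 16 * (t n ^ 2 / n) := by
      rw [ha, div_mul_eq_mul_div, div_le_iff₀ hkR, mul_comm (16 * (t n ^ 2 / (n:ℝ))) (k:ℝ),
        ← sub_nonneg]
      rw [show (k:ℝ) * (16 * (t n ^ 2 / (n:ℝ))) - 2 * (t n ^ 2 / 2) * 2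
          = 2 * t n ^ 2 * (8 * (k:ℝ) - (n:ℝ)) / (n:ℝ) by field_simp; ring]
      apply div_nonneg _ hnR.le
      nlinarith [sq_nonneg (t n)]
    constructor
    · rw [hH0, le_div_iff₀ hIMpos, one_mul]
      exact hlow
    · rw [hH0, div_le_iff₀ hIMpos]
      have hmul : 2 * a / k * IJ ≤ 2 * a / k * (2 * IM) :=
        mul_le_mul_of_nonneg_left hratio (by positivity)
      have hmul2 : 2 * a / k * (2 * IM) ≤ 16 * (t n ^ 2 / n) * IM := by
        rw [show 2 * a / k * (2 * IM) = (2 * a / k * 2) * IM by ring]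
        exact mul_le_mul_of_nonneg_right hcoef hIMpos.le
      nlinarith
  refine tendsto_of_tendsto_of_tendsto_of_le_of_le' tendsto_const_nhds hup
    (hkey.mono fun n h => h.1) (hkey.mono fun n h => h.2)
end

section
/- In the Gaussian location model X ~ N(m, I_n), for any δ > 0, the supremum over all orthogonally invariant tests T (measurable T: R^n → [0,1] with T(Px)=T(x) for all orthogonal P) and all mean vectors m with ||m|| ≤ δ of |E_m[T(X)] - E_0[T(X)]| converges to 0 as n → ∞. -/
open MeasureTheory Real
open scoped RealInnerProductSpace

/-- The standard Gaussian measure on `ℝ^n` with mean vector `m` and identity covariance. -/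
noncomputable def gaussianEuclidean (n : ℕ) (m : EuclideanSpace ℝ (Fin n)) :
    Measure (EuclideanSpace ℝ (Fin n)) :=
  volume.withDensity fun x =>
    ENNReal.ofReal ((2 * Real.pi) ^ (-(n : ℝ) / 2) * Real.exp (-‖x - m‖ ^ 2 / 2))

namespace GaussInvAux

noncomputable def gd (n : ℕ) (m : EuclideanSpace ℝ (Fin n))
    (x : EuclideanSpace ℝ (Fin n)) : ℝ :=
  (2 * π) ^ (-(n : ℝ) / 2) * rexp (-‖x - m‖ ^ 2 / 2)

noncomputable def Lr {n : ℕ} (w x : EuclideanSpace ℝ (Fin n)) : ℝ :=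
  rexp (⟪w, x⟫ - ‖w‖ ^ 2 / 2)

variable {n : ℕ}
local notation "En" => EuclideanSpace ℝ (Fin n)

lemma integral_rexp_gauss (w : En) :
    ∫ x : En, rexp (-(1/2) * ‖x‖^2 + ⟪w, x⟫) = (2*π)^((n:ℝ)/2) * rexp (‖w‖^2/2) := by
  have h := GaussianFourier.integral_cexp_neg_mul_sq_norm_add (V := En)
    (b := (1/2 : ℂ)) (by norm_num) 1 w
  rw [← Complex.ofReal_inj]
  rw [show ((∫ x : En, rexp (-(1/2) * ‖x‖^2 + ⟪w, x⟫) : ℝ) : ℂ)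
      = ∫ x : En, ((rexp (-(1/2) * ‖x‖^2 + ⟪w, x⟫) : ℝ) : ℂ) from (integral_ofReal).symm]
  have e1 : ∀ x : En, ((rexp (-(1/2) * ‖x‖^2 + ⟪w, x⟫) : ℝ) : ℂ)
      = Complex.exp (-(1/2 : ℂ) * ‖x‖^2 + 1 * ⟪w, x⟫) := by
    intro x
    rw [Complex.ofReal_exp]
    push_cast
    ring_nf
  simp_rw [e1]
  rw [h]
  rw [finrank_euclideanSpace_fin]
  have h2 : ((π : ℂ) / (1/2)) = ((2*π : ℝ) : ℂ) := by push_cast; ring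
  rw [h2]
  rw [show ((n : ℂ)/2) = (((n:ℝ)/2 : ℝ) : ℂ) by push_cast; ring]
  rw [← Complex.ofReal_cpow (by positivity)]
  rw [show ((1:ℂ)^2 * (‖w‖:ℂ)^2 / (4 * (1/2))) = ((‖w‖^2/2 : ℝ) : ℂ) by push_cast; ring]
  rw [← Complex.ofReal_exp]
  push_cast
  ring

lemma integrable_rexp_gauss (w : En) :
    Integrable (fun x : En ↦ rexp (-(1/2) * ‖x‖^2 + ⟪w, x⟫)) := by
  have h := GaussianFourier.integrable_cexp_neg_mul_sq_norm_add (V := En)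
    (b := (1/2 : ℂ)) (by norm_num) 1 w
  have := h.norm
  refine this.congr (Filter.Eventually.of_forall fun x ↦ ?_)
  simp only [Complex.norm_exp]
  have : (-(1/2 : ℂ) * ↑‖x‖^2 + 1 * ↑(⟪w, x⟫)) = (((-(1/2) * ‖x‖^2 + ⟪w, x⟫ : ℝ)) : ℂ) := by
    push_cast; ring
  rw [this, Complex.ofReal_re]

lemma gd_nonneg (m x : En) : 0 ≤ gd n m x := by unfold gd; positivity

lemma Lr_nonneg (w x : En) : 0 ≤ Lr w x := (Real.exp_pos _).le

lemma Lr_zero (x : En) : Lr 0 x = 1 := by simp [Lr]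

lemma measurable_gd (m : En) : Measurable (gd n m) := by
  unfold gd; fun_prop

lemma measurable_Lr (w : En) : Measurable (Lr (n := n) w) := by
  unfold Lr
  have : Continuous fun x : En ↦ ⟪w, x⟫ - ‖w‖ ^ 2 / 2 :=
    (continuous_const.inner continuous_id).sub continuous_const
  exact (Real.continuous_exp.comp this).measurable

lemma gd_eq (m x : En) : gd n m x = gd n 0 x * Lr m x := by
  unfold gd Lr
  rw [mul_assoc, ← Real.exp_add, sub_zero]
  congr 1
  rw [norm_sub_sq_real, real_inner_comm]
  ring_nf

lemma integral_gaussianEuclidean (m : En) (g : En → ℝ) :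
    ∫ x, g x ∂(gaussianEuclidean n m) = ∫ x, gd n m x * g x := by
  unfold gaussianEuclidean
  have hm : Measurable fun x : En ↦ (gd n m x).toNNReal :=
    (measurable_gd m).real_toNNReal
  have : (fun x : En ↦ ENNReal.ofReal ((2 * π) ^ (-(n:ℝ)/2) * rexp (-‖x - m‖ ^ 2 / 2)))
      = fun x ↦ ((gd n m x).toNNReal : ENNReal) := by
    funext x; rfl
  rw [this, integral_withDensity_eq_integral_smul hm]
  congr 1
  funext x
  rw [NNReal.smul_def, Real.coe_toNNReal _ (gd_nonneg m x), smul_eq_mul]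

lemma key_pointwise (u w x : En) :
    gd n 0 x * (Lr u x * Lr w x)
      = ((2*π) ^ (-(n:ℝ)/2) * rexp (-(‖u‖^2 + ‖w‖^2)/2))
        * rexp (-(1/2) * ‖x‖^2 + ⟪u + w, x⟫) := by
  unfold gd Lr
  rw [sub_zero, inner_add_left]
  simp only [← Real.exp_add, mul_assoc]
  congr 2
  ring

lemma key_integrable (u w : En) :
    Integrable (fun x : En ↦ gd n 0 x * (Lr u x * Lr w x)) := by
  simp only [key_pointwise]
  exact (integrable_rexp_gauss (u + w)).const_mul _

lemma key_integral (u w : En) :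
    ∫ x : En, gd n 0 x * (Lr u x * Lr w x) = rexp ⟪u, w⟫ := by
  simp only [key_pointwise]
  rw [integral_const_mul, integral_rexp_gauss (u + w), norm_add_sq_real]
  have h2π : (0:ℝ) < 2*π := by positivity
  have hc : (2*π) ^ (-(n:ℝ)/2) * (2*π) ^ ((n:ℝ)/2) = 1 := by
    rw [← Real.rpow_add h2π]
    rw [show -(n:ℝ)/2 + (n:ℝ)/2 = 0 by ring, Real.rpow_zero]
  have : (2*π)^(-(n:ℝ)/2) * rexp (-(‖u‖^2+‖w‖^2)/2)
        * ((2*π)^((n:ℝ)/2) * rexp ((‖u‖^2 + 2*⟪u,w⟫ + ‖w‖^2)/2))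
      = ((2*π)^(-(n:ℝ)/2) * (2*π)^((n:ℝ)/2))
        * (rexp (-(‖u‖^2+‖w‖^2)/2) * rexp ((‖u‖^2 + 2*⟪u,w⟫ + ‖w‖^2)/2)) := by ring
  rw [this, hc, one_mul, ← Real.exp_add]
  congr 1
  ring

lemma integrable_gd : Integrable (gd n 0) := by
  have := key_integrable (n := n) 0 0
  simpa [Lr_zero] using this

lemma integral_gd : ∫ x : En, gd n 0 x = 1 := by
  have := key_integral (n := n) 0 0
  simpa [Lr_zero] using this

lemma integral_comp_iso (Q : (En) ≃ₗᵢ[ℝ] En) (g : En → ℝ) :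
    ∫ x : En, g (Q x) = ∫ x : En, g x :=
  (Q.measurePreserving).integral_comp Q.toHomeomorph.measurableEmbedding g

lemma gd_iso (Q : (En) ≃ₗᵢ[ℝ] En) (x : En) :
    gd n 0 (Q x) = gd n 0 x := by
  unfold gd
  rw [sub_zero, sub_zero, Q.norm_map]

lemma Lr_iso (Q : (En) ≃ₗᵢ[ℝ] En) (w x : En) :
    Lr w (Q x) = Lr (Q.symm w) x := by
  unfold Lr
  rw [show ⟪w, Q x⟫ = ⟪Q (Q.symm w), Q x⟫ by rw [Q.apply_symm_apply],
    Q.inner_map_map, Q.symm.norm_map]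

lemma scalar_bound {a t ε : ℝ} (hε : 0 < ε) (ht : |t| ≤ 1) :
    |a * t| ≤ a^2/(2*ε) + ε/2 := by
  rw [abs_mul]
  have h1 : |a| * |t| ≤ |a| := mul_le_of_le_one_right (abs_nonneg a) ht
  have h2 : |a| ≤ a^2/(2*ε) + ε/2 := by
    have h2ε : (0:ℝ) < 2*ε := by positivity
    have hkey : 2*ε*|a| ≤ a^2 + ε*ε := by
      nlinarith [sq_nonneg (|a| - ε), sq_abs a]
    calc |a| = (2*ε*|a|)/(2*ε) := by field_simp
      _ ≤ (a^2 + ε*ε)/(2*ε) := by gcongr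
      _ = a^2/(2*ε) + ε/2 := by field_simp
  linarith

end GaussInvAux

open GaussInvAux

open GaussInvAux

set_option maxHeartbeats 2000000 in
/-- In the Gaussian location model `X ~ N(m, I_n)`, for any `δ > 0`, the
supremum over all orthogonally invariant tests `T : ℝ^n → [0,1]` and all `m` with
`‖m‖ ≤ δ` of `|E_m[T] - E_0[T]|` tends to `0` as `n → ∞`. -/
theorem orthogonally_invariant_tests_power_tendsto_level
    (δ : ℝ) (hδ : 0 < δ) :
    ∀ ε > 0, ∃ N : ℕ, ∀ n ≥ N,
      ∀ (T : EuclideanSpace ℝ (Fin n) → ℝ) (m : EuclideanSpace ℝ (Fin n)),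
        Measurable T → (∀ x, T x ∈ Set.Icc (0 : ℝ) 1) →
        (∀ (Q : EuclideanSpace ℝ (Fin n) ≃ₗᵢ[ℝ] EuclideanSpace ℝ (Fin n)) (x), T (Q x) = T x) →
        ‖m‖ ≤ δ →
        |∫ x, T x ∂(gaussianEuclidean n m) - ∫ x, T x ∂(gaussianEuclidean n 0)| ≤ ε := by
  intro ε hε
  refine ⟨⌈(rexp (δ^2) - 1) / ε^2⌉₊ + 1, fun n hn T m hTmeas hT01 hTinv hmδ ↦ ?_⟩
  have hn1 : 1 ≤ n := le_trans (Nat.le_add_left 1 _) hn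
  have hn0 : (0:ℝ) < n := by exact_mod_cast hn1
  -- the key quantity bound coming from n large
  have hNn : (rexp (δ^2) - 1) / ε^2 ≤ (n:ℝ) := by
    calc (rexp (δ^2) - 1) / ε^2 ≤ (⌈(rexp (δ^2) - 1) / ε^2⌉₊ : ℝ) := Nat.le_ceil _
    _ ≤ (n:ℝ) := by exact_mod_cast le_trans (Nat.le_succ _) hn
  have hvar : (rexp (‖m‖^2) - 1) / (n:ℝ) ≤ ε^2 := by
    have h1 : rexp (‖m‖^2) ≤ rexp (δ^2) := by
      apply Real.exp_le_exp.2
      have := norm_nonneg m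
      nlinarith
    have h2 : rexp (δ^2) - 1 ≤ ε^2 * n := by
      have := (div_le_iff₀ (pow_pos hε 2)).1 hNn
      nlinarith
    rw [div_le_iff₀ hn0]
    nlinarith
  -- abbreviations
  let d0 : EuclideanSpace ℝ (Fin n) → ℝ := gd n 0
  have hd0 : ∀ x, d0 x = gd n 0 x := fun _ ↦ rfl
  -- the coordinate vectors of norm ‖m‖
  set u : Fin n → EuclideanSpace ℝ (Fin n) :=
    fun i ↦ ‖m‖ • (EuclideanSpace.single i (1:ℝ)) with hu
  have hnorm_u : ∀ i, ‖u i‖ = ‖m‖ := by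
    intro i
    rw [hu, norm_smul, EuclideanSpace.norm_single]
    simp [abs_of_nonneg (norm_nonneg m)]
  have hinner_u : ∀ i j, ⟪u i, u j⟫ = if i = j then ‖m‖^2 else 0 := by
    intro i j
    rw [hu]
    simp only [real_inner_smul_left, real_inner_smul_right,
      EuclideanSpace.inner_single_left, RCLike.star_def, conj_trivial, one_mul]
    by_cases hij : i = j
    · subst hij; simp [EuclideanSpace.single_apply]; ring
    · simp [EuclideanSpace.single_apply, Ne.symm hij, hij]
  have hT1 : ∀ x, |T x| ≤ 1 := fun x ↦ by
    rcases hT01 x with ⟨h0, h1⟩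
    rw [abs_of_nonneg h0]; exact h1
  -- Step A: representation of E_m using each coordinate direction
  have stepA : ∀ i, ∫ x, T x ∂(gaussianEuclidean n m)
      = ∫ x, d0 x * (Lr (u i) x * T x) := by
    intro i
    rw [integral_gaussianEuclidean m T]
    have h1 : ∀ x, gd n m x * T x = d0 x * (Lr m x * T x) := by
      intro x; rw [gd_eq m x, mul_assoc]
    simp_rw [h1]
    set Q := Submodule.reflection (ℝ ∙ (u i - m))ᗮ with hQdef
    have hQ : Q (u i) = m := Submodule.reflection_sub (by rw [hnorm_u])
    have hQs : Q.symm m = u i := by rw [← hQ, Q.symm_apply_apply]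
    rw [← integral_comp_iso Q (fun x ↦ d0 x * (Lr m x * T x))]
    congr 1
    funext x
    show gd n 0 (Q x) * (Lr m (Q x) * T (Q x)) = gd n 0 x * (Lr (u i) x * T x)
    rw [gd_iso Q x, Lr_iso Q m x, hQs, hTinv Q x]
  -- integrability facts
  have int_LiT : ∀ i, Integrable (fun x ↦ d0 x * (Lr (u i) x * T x)) := by
    intro i
    refine (key_integrable (u i) 0).mono'
      (((measurable_gd 0).mul ((measurable_Lr _).mul hTmeas)).aestronglyMeasurable) ?_
    refine Filter.Eventually.of_forall fun x ↦ ?_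
    rw [Real.norm_eq_abs, abs_mul, abs_mul, Lr_zero,
      abs_of_nonneg (gd_nonneg 0 x), abs_of_nonneg (Lr_nonneg _ x), mul_one]
    have hg := gd_nonneg (n := n) 0 x
    have hl := Lr_nonneg (u i) x
    have h1 : Lr (u i) x * |T x| ≤ Lr (u i) x := by
      have := mul_le_mul_of_nonneg_left (hT1 x) hl
      simpa using this
    exact mul_le_mul_of_nonneg_left h1 hg
  have int_dT : Integrable (fun x ↦ d0 x * T x) := by
    refine integrable_gd.mono' (((measurable_gd 0).mul hTmeas).aestronglyMeasurable) ?_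
    refine Filter.Eventually.of_forall fun x ↦ ?_
    rw [Real.norm_eq_abs, abs_mul, abs_of_nonneg (gd_nonneg 0 x)]
    have hg := gd_nonneg (n := n) 0 x
    have := mul_le_mul_of_nonneg_left (hT1 x) hg
    simpa using this
  -- the averaged likelihood ratio S/n
  set S : EuclideanSpace ℝ (Fin n) → ℝ := fun x ↦ ∑ i, Lr (u i) x with hS
  have int_dST : Integrable (fun x ↦ d0 x * (S x * T x)) := by
    have : (fun x ↦ d0 x * (S x * T x))
        = fun x ↦ ∑ i, d0 x * (Lr (u i) x * T x) := by
      funext x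
      rw [hS]
      simp only [Finset.sum_mul, Finset.mul_sum]
    rw [this]
    exact integrable_finset_sum _ fun i _ ↦ int_LiT i
  have int_dS : Integrable (fun x ↦ d0 x * S x) := by
    have : (fun x ↦ d0 x * S x)
        = fun x ↦ ∑ i, d0 x * (Lr (u i) x * Lr 0 x) := by
      funext x
      simp only [Lr_zero, mul_one, hS, Finset.mul_sum]
    rw [this]
    exact integrable_finset_sum _ fun i _ ↦ key_integrable (u i) 0
  have int_dSS : Integrable (fun x ↦ d0 x * (S x * S x)) := by
    have : (fun x ↦ d0 x * (S x * S x))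
        = fun x ↦ ∑ i, ∑ j, d0 x * (Lr (u i) x * Lr (u j) x) := by
      funext x
      rw [hS, Finset.sum_mul_sum, Finset.mul_sum]
      refine Finset.sum_congr rfl fun i _ ↦ ?_
      rw [Finset.mul_sum]
    rw [this]
    exact integrable_finset_sum _ fun i _ ↦ integrable_finset_sum _ fun j _ ↦
      key_integrable (u i) (u j)
  -- values
  have val_dS : ∫ x, d0 x * S x = (n:ℝ) := by
    have : (fun x ↦ d0 x * S x)
        = fun x ↦ ∑ i, d0 x * (Lr (u i) x * Lr 0 x) := by
      funext x
      simp only [Lr_zero, mul_one, hS, Finset.mul_sum]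
    rw [this, integral_finset_sum _ fun i _ ↦ key_integrable (u i) 0]
    simp [key_integral]
  have val_dSS : ∫ x, d0 x * (S x * S x) = (n:ℝ) * (rexp (‖m‖^2) + ((n:ℝ) - 1)) := by
    have hfun : (fun x ↦ d0 x * (S x * S x))
        = fun x ↦ ∑ i, ∑ j, d0 x * (Lr (u i) x * Lr (u j) x) := by
      funext x
      rw [hS, Finset.sum_mul_sum, Finset.mul_sum]
      refine Finset.sum_congr rfl fun i _ ↦ ?_
      rw [Finset.mul_sum]
    rw [hfun, integral_finset_sum _ fun i _ ↦ integrable_finset_sum _ fun j _ ↦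
      key_integrable (u i) (u j)]
    have : ∀ i : Fin n, ∫ x, ∑ j, d0 x * (Lr (u i) x * Lr (u j) x)
        = rexp (‖m‖^2) + ((n:ℝ) - 1) := by
      intro i
      rw [integral_finset_sum _ fun j _ ↦ key_integrable (u i) (u j)]
      have : ∀ j : Fin n, ∫ x, d0 x * (Lr (u i) x * Lr (u j) x)
          = (if i = j then rexp (‖m‖^2) - 1 else 0) + 1 := by
        intro j
        rw [key_integral (u i) (u j), hinner_u]
        by_cases hij : i = j <;> simp [hij]
      simp only [hd0] at this ⊢
      simp_rw [this]
      rw [Finset.sum_add_distrib, Finset.sum_ite_eq, Finset.sum_const]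
      simp [Finset.card_univ]
      ring
    simp only [hd0] at this ⊢
    simp_rw [this]
    rw [Finset.sum_const]
    simp [Finset.card_univ]
    ring
  -- representation of the difference
  have hEm : ∫ x, T x ∂(gaussianEuclidean n m)
      = (n:ℝ)⁻¹ * ∫ x, d0 x * (S x * T x) := by
    have h1 : ∫ x, d0 x * (S x * T x)
        = ∑ i : Fin n, ∫ x, d0 x * (Lr (u i) x * T x) := by
      have : (fun x ↦ d0 x * (S x * T x))
          = fun x ↦ ∑ i, d0 x * (Lr (u i) x * T x) := by
        funext x
        rw [hS]
        simp only [Finset.sum_mul, Finset.mul_sum]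
      rw [this, integral_finset_sum _ fun i _ ↦ int_LiT i]
    rw [h1]
    have h2 : ∀ i : Fin n, ∫ x, d0 x * (Lr (u i) x * T x)
        = ∫ x, T x ∂(gaussianEuclidean n m) := fun i ↦ (stepA i).symm
    simp_rw [h2]
    rw [Finset.sum_const]
    simp [Finset.card_univ]
    field_simp
  have hE0 : ∫ x, T x ∂(gaussianEuclidean n 0) = ∫ x, d0 x * T x := by
    rw [integral_gaussianEuclidean 0 T]
  -- the difference as a single integral
  have hdiff : ∫ x, T x ∂(gaussianEuclidean n m) - ∫ x, T x ∂(gaussianEuclidean n 0)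
      = ∫ x, (((n:ℝ)⁻¹ * S x - 1) * T x) * d0 x := by
    rw [hEm, hE0, ← integral_const_mul, ← integral_sub (int_dST.const_mul _) int_dT]
    congr 1
    funext x
    ring
  rw [hdiff]
  -- quadratic bound
  have hquad : |∫ x, (((n:ℝ)⁻¹ * S x - 1) * T x) * d0 x|
      ≤ ∫ x, (((n:ℝ)⁻¹ * S x - 1)^2 / (2*ε) + ε/2) * d0 x := by
    rw [← Real.norm_eq_abs]
    refine norm_integral_le_of_norm_le ?_ ?_
    · -- integrability of the bound
      have : (fun x ↦ (((n:ℝ)⁻¹ * S x - 1)^2 / (2*ε) + ε/2) * d0 x)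
          = fun x ↦ ((2*ε)⁻¹ * ((n:ℝ)⁻¹^2 * (d0 x * (S x * S x)))
              + ((-(2*ε)⁻¹ * 2 * (n:ℝ)⁻¹) * (d0 x * S x))
              + ((2*ε)⁻¹ + ε/2) * d0 x) := by
        funext x
        field_simp
        ring
      rw [this]
      exact (((int_dSS.const_mul _).const_mul _).add ((int_dS.const_mul _))).add
        (integrable_gd.const_mul _)
    · refine Filter.Eventually.of_forall fun x ↦ ?_
      rw [Real.norm_eq_abs, abs_mul, abs_of_nonneg (gd_nonneg 0 x)]
      exact mul_le_mul_of_nonneg_right (scalar_bound hε (hT1 x)) (gd_nonneg (n := n) 0 x)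
  refine le_trans hquad ?_
  -- compute the integral of the bound
  have hval : ∫ x, (((n:ℝ)⁻¹ * S x - 1)^2 / (2*ε) + ε/2) * d0 x
      = (2*ε)⁻¹ * ((rexp (‖m‖^2) - 1) / (n:ℝ)) + ε/2 := by
    have hfun : (fun x ↦ (((n:ℝ)⁻¹ * S x - 1)^2 / (2*ε) + ε/2) * d0 x)
        = fun x ↦ ((2*ε)⁻¹ * ((n:ℝ)⁻¹^2 * (d0 x * (S x * S x)))
            + ((-(2*ε)⁻¹ * 2 * (n:ℝ)⁻¹) * (d0 x * S x))
            + ((2*ε)⁻¹ + ε/2) * d0 x) := by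
      funext x
      field_simp
      ring
    rw [hfun]
    have hA : Integrable (fun x ↦ (2*ε)⁻¹ * ((n:ℝ)⁻¹^2 * (d0 x * (S x * S x)))) :=
      (int_dSS.const_mul _).const_mul _
    have hB : Integrable (fun x ↦ (-(2*ε)⁻¹ * 2 * (n:ℝ)⁻¹) * (d0 x * S x)) :=
      int_dS.const_mul _
    have hC : Integrable (fun x ↦ ((2*ε)⁻¹ + ε/2) * d0 x) := integrable_gd.const_mul _
    have hAB : Integrable (fun x ↦ (2*ε)⁻¹ * ((n:ℝ)⁻¹^2 * (d0 x * (S x * S x)))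
        + (-(2*ε)⁻¹ * 2 * (n:ℝ)⁻¹) * (d0 x * S x)) := hA.add hB
    rw [integral_add hAB hC, integral_add hA hB]
    rw [integral_const_mul, integral_const_mul, integral_const_mul, integral_const_mul]
    rw [val_dSS, val_dS, integral_gd]
    field_simp
    ring
  rw [hval]
  -- final numeric bound
  have : (2*ε)⁻¹ * ((rexp (‖m‖^2) - 1) / (n:ℝ)) ≤ (2*ε)⁻¹ * ε^2 := by
    apply mul_le_mul_of_nonneg_left hvar (by positivity)
  calc (2*ε)⁻¹ * ((rexp (‖m‖^2) - 1) / (n:ℝ)) + ε/2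
      ≤ (2*ε)⁻¹ * ε^2 + ε/2 := by linarith
    _ = ε := by field_simp; ring
end
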